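/- Let a, b, c be real numbers with c ≠ 0. For every n ∈ ℕ, the matrices Λₙ(D₁) = [[-2n, -2abn, 0],[0, -2n+2, 0],[0, 0, -2n]] and Λₙ(D₂) = [[2+4/c², 0, -2a(n+1)/c],[0, 2+4/c², 0],[0, 0, -2n]] satisfy Λₙ(D₁)·Λₙ(D₂) = Λₙ(D₂)² + (2(c²+2)/c²)·(Λₙ(D₁) - Λₙ(D₂)). -/
import Mathlib


open Matrix

/-- Eigenvalue matrix Λₙ(D₁). -/
noncomputable def Lambda1 (a b : ℝ) (n : ℕ) : Matrix (Fin 3) (Fin 3) ℝ :=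
  !![-2 * (n : ℝ), -2 * a * b * (n : ℝ), 0;
     0, -2 * (n : ℝ) + 2, 0;
     0, 0, -2 * (n : ℝ)]

/-- Eigenvalue matrix Λₙ(D₂). -/
noncomputable def Lambda2 (a c : ℝ) (n : ℕ) : Matrix (Fin 3) (Fin 3) ℝ :=
  !![2 + 4 / c ^ 2, 0, -2 * a * ((n : ℝ) + 1) / c;
     0, 2 + 4 / c ^ 2, 0;
     0, 0, -2 * (n : ℝ)]

/-- the relation Λₙ(D₁)Λₙ(D₂) = Λₙ(D₂)² + (2(c²+2)/c²)(Λₙ(D₁) - Λₙ(D₂)). -/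
theorem eigenvalues_relation (a b c : ℝ) (hc : c ≠ 0) (n : ℕ) :
    Lambda1 a b n * Lambda2 a c n
      = Lambda2 a c n ^ 2
        + (2 * (c ^ 2 + 2) / c ^ 2) • (Lambda1 a b n - Lambda2 a c n) := by
  have hc2 : c ^ 2 ≠ 0 := pow_ne_zero _ hc
  rw [pow_two (Lambda2 a c n)]
  unfold Lambda1 Lambda2
  ext i j
  fin_cases i <;> fin_cases j <;>
    simp [Matrix.mul_apply, Fin.sum_univ_three, Matrix.smul_apply, Matrix.vecHead, Matrix.vecTail] <;>
    field_simp <;> ring
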